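/- Let (v_t), (α_t), (p_t) be nonnegative real-valued random sequences adapted to a filtration (F_t) with F_t generated by {v_ℓ, α_ℓ, p_ℓ : 0 ≤ ℓ ≤ t}, and let (q_t) be a deterministic nonnegative scalar sequence. Suppose that almost surely Σ_{t=0}^∞ α_t < ∞, Σ_{t=0}^∞ p_t < ∞, that Σ_{t=0}^∞ q_t = ∞, and that E[v_{t+1} | F_t] ≤ (1 + α_t − q_t) v_t + p_t holds almost surely for all t ≥ 0. Then Σ_{t=0}^∞ q_t v_t < ∞ and lim_{t→∞} v_t = 0 almost surely. -/

import Mathlib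

open MeasureTheory Filter Topology

section RSdet

lemma rs_A_pos {a : ℕ → ℝ} (ha : ∀ t, 0 ≤ a t) (t : ℕ) :
    (0:ℝ) < ∏ s ∈ Finset.range t, (1 + a s) := by
  apply Finset.prod_pos; intro i _; linarith [ha i]

lemma rs_one_le_A {a : ℕ → ℝ} (ha : ∀ t, 0 ≤ a t) (t : ℕ) :
    (1:ℝ) ≤ ∏ s ∈ Finset.range t, (1 + a s) := by
  have h := Finset.prod_le_prod (s := Finset.range t) (f := fun _ => (1:ℝ))
    (g := fun s => 1 + a s) (fun i _ => zero_le_one) (fun i _ => by linarith [ha i])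
  simpa using h

lemma rs_A_le {a : ℕ → ℝ} (ha : ∀ t, 0 ≤ a t) (has : Summable a) (t : ℕ) :
    ∏ s ∈ Finset.range t, (1 + a s) ≤ Real.exp (∑' s, a s) := by
  calc ∏ s ∈ Finset.range t, (1 + a s) ≤ ∏ s ∈ Finset.range t, Real.exp (a s) := by
        apply Finset.prod_le_prod
        · intro i _; linarith [ha i]
        · intro i _; linarith [Real.add_one_le_exp (a i)]
    _ = Real.exp (∑ s ∈ Finset.range t, a s) := by rw [Real.exp_sum]
    _ ≤ Real.exp (∑' s, a s) := by
        apply Real.exp_le_exp.2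
        exact Summable.sum_le_tsum _ (fun i _ => ha i) has

/-- Deterministic part of the Robbins–Siegmund lemma. -/
lemma rs_real (x a r q : ℕ → ℝ)
    (hx : ∀ t, 0 ≤ x t) (ha : ∀ t, 0 ≤ a t) (hr : ∀ t, 0 ≤ r t) (hq : ∀ t, 0 ≤ q t)
    (has : Summable a) (hrs : Summable r)
    (hqd : Tendsto (fun T => ∑ t ∈ Finset.range T, q t) atTop atTop)
    (L : ℝ)
    (hY : Tendsto (fun t => x t / (∏ s ∈ Finset.range t, (1 + a s)) +
      ∑ s ∈ Finset.range t, (q s * x s - r s) / (∏ u ∈ Finset.range (s+1), (1 + a u)))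
      atTop (𝓝 L)) :
    Summable (fun t => q t * x t) ∧ Tendsto x atTop (𝓝 0) := by
  set A : ℕ → ℝ := fun t => ∏ s ∈ Finset.range t, (1 + a s) with hA
  have hApos := rs_A_pos ha
  have hA1 := rs_one_le_A ha
  set C : ℝ := Real.exp (∑' s, a s) with hC
  have hAC : ∀ t, A t ≤ C := rs_A_le ha has
  -- P converges
  have hPsum : Summable (fun s => r s / A (s+1)) := by
    apply Summable.of_nonneg_of_le (fun s => div_nonneg (hr s) (hApos (s+1)).le)
      (fun s => ?_) hrs
    rw [div_le_iff₀ (hApos (s+1))]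
    nlinarith [hA1 (s+1), hr s]
  have hP : Tendsto (fun t => ∑ s ∈ Finset.range t, r s / A (s+1)) atTop
      (𝓝 (∑' s, r s / A (s+1))) := hPsum.hasSum.tendsto_sum_nat
  -- G t = x t / A t + Q t
  have hsplit : ∀ t, ∑ s ∈ Finset.range t, (q s * x s - r s) / A (s+1)
      = (∑ s ∈ Finset.range t, q s * x s / A (s+1)) - ∑ s ∈ Finset.range t, r s / A (s+1) := by
    intro t
    rw [← Finset.sum_sub_distrib]
    congr 1; ext s; rw [sub_div]
  set Q : ℕ → ℝ := fun t => ∑ s ∈ Finset.range t, q s * x s / A (s+1) with hQ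
  have hG : Tendsto (fun t => x t / A t + Q t) atTop (𝓝 (L + ∑' s, r s / A (s+1))) := by
    have := hY.add hP
    convert this using 2 with t
    rw [hsplit t]; ring
  set L' := L + ∑' s, r s / A (s+1) with hL'
  -- Q t ≤ L'
  have hQmono : Monotone Q := by
    apply monotone_nat_of_le_succ
    intro n
    simp only [hQ, Finset.sum_range_succ]
    have : 0 ≤ q n * x n / A (n+1) := div_nonneg (mul_nonneg (hq n) (hx n)) (hApos (n+1)).le
    linarith
  have hQle : ∀ t, Q t ≤ L' := by
    intro t
    apply ge_of_tendsto hG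
    filter_upwards [eventually_ge_atTop t] with u hu
    have h1 : Q t ≤ Q u := hQmono hu
    have h2 : 0 ≤ x u / A u := div_nonneg (hx u) (hApos u).le
    linarith
  have hQsum : Summable (fun s => q s * x s / A (s+1)) :=
    summable_of_sum_range_le (fun n => div_nonneg (mul_nonneg (hq n) (hx n)) (hApos (n+1)).le) hQle
  have hsum1 : Summable (fun t => q t * x t) := by
    apply Summable.of_nonneg_of_le (fun t => mul_nonneg (hq t) (hx t)) (fun t => ?_)
      (hQsum.mul_left C)
    have h1 : q t * x t / A (t+1) * A (t+1) = q t * x t :=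
      div_mul_cancel₀ _ (hApos (t+1)).ne'
    calc q t * x t = q t * x t / A (t+1) * A (t+1) := h1.symm
      _ ≤ q t * x t / A (t+1) * C := by
          apply mul_le_mul_of_nonneg_left (hAC (t+1))
          exact div_nonneg (mul_nonneg (hq t) (hx t)) (hApos (t+1)).le
      _ = C * (q t * x t / A (t+1)) := by ring
  refine ⟨hsum1, ?_⟩
  -- x t / A t converges to c
  have hQlim : Tendsto Q atTop (𝓝 (∑' s, q s * x s / A (s+1))) := hQsum.hasSum.tendsto_sum_nat
  set c : ℝ := L' - ∑' s, q s * x s / A (s+1) with hc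
  have hxA : Tendsto (fun t => x t / A t) atTop (𝓝 c) := by
    have := hG.sub hQlim
    convert this using 2 with t
    ring
  have hc0 : 0 ≤ c := le_of_tendsto_of_tendsto' tendsto_const_nhds hxA
    (fun t => div_nonneg (hx t) (hApos t).le)
  -- c = 0
  have hcz : c = 0 := by
    by_contra hne
    have hcpos : 0 < c := lt_of_le_of_ne hc0 (Ne.symm hne)
    have hev : ∀ᶠ t in atTop, c/2 ≤ x t / A t := by
      have := hxA (Ioi_mem_nhds (half_lt_self hcpos))
      filter_upwards [this] with t ht
      exact le_of_lt ht
    obtain ⟨T, hT⟩ := eventually_atTop.1 hev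
    have hsum2 : Summable (fun t => q t * (x t / A t)) := by
      apply Summable.of_nonneg_of_le
        (fun t => mul_nonneg (hq t) (div_nonneg (hx t) (hApos t).le)) (fun t => ?_) hsum1
      rw [mul_div_assoc'] at *
      apply div_le_self (mul_nonneg (hq t) (hx t)) (hA1 t)
    set S := (∑ t ∈ Finset.range T, q t) + (2/c) * ∑' t, q t * (x t / A t) with hS
    have hbd : ∀ n, ∑ t ∈ Finset.range n, q t ≤ S := by
      intro n
      rcases le_or_gt n T with h | h
      · have h1 : ∑ t ∈ Finset.range n, q t ≤ ∑ t ∈ Finset.range T, q t := by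
          apply Finset.sum_le_sum_of_subset_of_nonneg (Finset.range_subset_range.2 h)
          intro i _ _; exact hq i
        have h2 : 0 ≤ (2/c) * ∑' t, q t * (x t / A t) := by
          apply mul_nonneg (by positivity)
          exact tsum_nonneg (fun t => mul_nonneg (hq t) (div_nonneg (hx t) (hApos t).le))
        rw [hS]; linarith
      · rw [← Finset.sum_range_add_sum_Ico _ h.le, hS]
        have h3 : ∑ t ∈ Finset.Ico T n, q t ≤ (2/c) * ∑ t ∈ Finset.Ico T n, q t * (x t / A t) := by
          rw [Finset.mul_sum]
          apply Finset.sum_le_sum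
          intro i hi
          have hi' : T ≤ i := (Finset.mem_Ico.1 hi).1
          have := hT i hi'
          have hqi := hq i
          calc q i = (2/c) * (q i * (c/2)) := by field_simp
            _ ≤ (2/c) * (q i * (x i / A i)) := by
                apply mul_le_mul_of_nonneg_left _ (by positivity)
                exact mul_le_mul_of_nonneg_left this hqi
        have h4 : ∑ t ∈ Finset.Ico T n, q t * (x t / A t) ≤ ∑' t, q t * (x t / A t) := by
          apply Summable.sum_le_tsum
          · intro i _; exact mul_nonneg (hq i) (div_nonneg (hx i) (hApos i).le)
          · exact hsum2
        have h5 : (2/c) * ∑ t ∈ Finset.Ico T n, q t * (x t / A t) ≤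
            (2/c) * ∑' t, q t * (x t / A t) := by
          apply mul_le_mul_of_nonneg_left h4 (by positivity)
        exact add_le_add_right (h3.trans h5) _
    obtain ⟨n, hn⟩ := (hqd.eventually_gt_atTop S).exists
    exact absurd (hbd n) (not_le.2 hn)
  rw [hcz] at hxA
  -- squeeze
  apply squeeze_zero hx (fun t => ?_) (by simpa using hxA.const_mul C)
  calc x t = x t / A t * A t := (div_mul_cancel₀ _ (hApos t).ne').symm
    _ ≤ x t / A t * C := mul_le_mul_of_nonneg_left (hAC t) (div_nonneg (hx t) (hApos t).le)
    _ = C * (x t / A t) := by ring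

end RSdet

section RSstoch

variable {Ω : Type*}

noncomputable def rsA (α : ℕ → Ω → ℝ) (t : ℕ) (ω : Ω) : ℝ := ∏ s ∈ Finset.range t, (1 + α s ω)

noncomputable def rsY (v α p : ℕ → Ω → ℝ) (q : ℕ → ℝ) (t : ℕ) (ω : Ω) : ℝ :=
  v t ω / rsA α t ω + ∑ s ∈ Finset.range t, (q s * v s ω - p s ω) / rsA α (s + 1) ω

def rsD (α p : ℕ → Ω → ℝ) (M : ℝ) (t : ℕ) : Set Ω :=
  {ω | ∀ n ≤ t, ∑ s ∈ Finset.range n, (α s ω + p s ω) ≤ M}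

noncomputable def rsZ (v α p : ℕ → Ω → ℝ) (q : ℕ → ℝ) (M : ℝ) (t : ℕ) (ω : Ω) : ℝ :=
  v 0 ω + ∑ s ∈ Finset.range t,
    (rsD α p M (s + 1)).indicator (fun ω' => rsY v α p q (s + 1) ω' - rsY v α p q s ω') ω

variable {v α p : ℕ → Ω → ℝ} {q : ℕ → ℝ} {M : ℝ}

lemma rsD_antitone {s t : ℕ} (h : s ≤ t) : rsD α p M t ⊆ rsD α p M s :=
  fun ω hω n hn => hω n (hn.trans h)

lemma mem_rsD_zero (hM : 0 ≤ M) (ω : Ω) : ω ∈ rsD α p M 0 := by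
  intro n hn
  obtain rfl : n = 0 := Nat.le_zero.1 hn
  simpa using hM

lemma rsZ_zero (ω : Ω) : rsZ v α p q M 0 ω = v 0 ω := by simp [rsZ]

lemma rsY_zero (ω : Ω) : rsY v α p q 0 ω = v 0 ω := by simp [rsY, rsA]

lemma rsZ_succ (t : ℕ) (ω : Ω) : rsZ v α p q M (t+1) ω = rsZ v α p q M t ω +
    (rsD α p M (t+1)).indicator (fun ω' => rsY v α p q (t+1) ω' - rsY v α p q t ω') ω := by
  simp [rsZ, Finset.sum_range_succ, add_assoc]

lemma rsY_succ_sub (t : ℕ) (ω : Ω) : rsY v α p q (t+1) ω - rsY v α p q t ω =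
    v (t+1) ω / rsA α (t+1) ω - v t ω / rsA α t ω
      + (q t * v t ω - p t ω) / rsA α (t+1) ω := by
  simp only [rsY, Finset.sum_range_succ]; ring

lemma rsZ_rep (hM : 0 ≤ M) (t : ℕ) (ω : Ω) :
    ∃ k, k ≤ t ∧ rsZ v α p q M t ω = rsY v α p q k ω ∧ ω ∈ rsD α p M k ∧
      (k = t ∨ ω ∉ rsD α p M (k+1)) := by
  induction t with
  | zero => exact ⟨0, le_rfl, by rw [rsZ_zero, rsY_zero], mem_rsD_zero hM ω, Or.inl rfl⟩
  | succ t ih =>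
    obtain ⟨k, hk, hZ, hD, hlast⟩ := ih
    by_cases hω : ω ∈ rsD α p M (t+1)
    · have hkt : k = t := by
        rcases hlast with h | h
        · exact h
        · exact absurd (rsD_antitone (by omega) hω) h
      refine ⟨t+1, le_rfl, ?_, hω, Or.inl rfl⟩
      rw [rsZ_succ, Set.indicator_of_mem hω, hZ, hkt]; ring
    · refine ⟨k, hk.trans (Nat.le_succ t), ?_, hD, ?_⟩
      · rw [rsZ_succ, Set.indicator_of_notMem hω, hZ, add_zero]
      · rcases hlast with h | h
        · exact Or.inr (h ▸ hω)
        · exact Or.inr h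

lemma rsZ_eq_rsY {ω : Ω} (h : ∀ t, ω ∈ rsD α p M t) (t : ℕ) :
    rsZ v α p q M t ω = rsY v α p q t ω := by
  induction t with
  | zero => rw [rsZ_zero, rsY_zero]
  | succ t ih => rw [rsZ_succ, Set.indicator_of_mem (h (t+1)), ih]; ring

lemma rsA_eq (t : ℕ) (ω : Ω) : rsA α t ω = ∏ s ∈ Finset.range t, (1 + α s ω) := rfl

lemma rsA_pos {ω : Ω} (hα : ∀ s, 0 ≤ α s ω) (t : ℕ) : 0 < rsA α t ω :=
  rs_A_pos (a := fun s => α s ω) hα t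

lemma rsA_one_le {ω : Ω} (hα : ∀ s, 0 ≤ α s ω) (t : ℕ) : 1 ≤ rsA α t ω :=
  rs_one_le_A (a := fun s => α s ω) hα t

lemma rsY_lower {ω : Ω} (hv : ∀ s, 0 ≤ v s ω) (hα : ∀ s, 0 ≤ α s ω) (hp : ∀ s, 0 ≤ p s ω)
    (hq : ∀ s, 0 ≤ q s) {k : ℕ} (hD : ω ∈ rsD α p M k) : -M ≤ rsY v α p q k ω := by
  have hterm : ∀ s, -(α s ω + p s ω) ≤ (q s * v s ω - p s ω) / rsA α (s+1) ω := by
    intro s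
    have hpos := rsA_pos hα (s+1)
    have h1 : -(p s ω) ≤ q s * v s ω - p s ω := by
      have := mul_nonneg (hq s) (hv s); linarith
    have h2 : -(p s ω) / rsA α (s+1) ω ≤ (q s * v s ω - p s ω) / rsA α (s+1) ω := by
      exact (div_le_div_iff_of_pos_right hpos).mpr h1
    have h4 : p s ω / rsA α (s+1) ω ≤ p s ω := div_le_self (hp s) (rsA_one_le hα (s+1))
    have h3 : -(p s ω) / rsA α (s+1) ω = -(p s ω / rsA α (s+1) ω) := neg_div _ _
    rw [h3] at h2
    linarith [hα s]
  have hsum : ∑ s ∈ Finset.range k, -(α s ω + p s ω) ≤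
      ∑ s ∈ Finset.range k, (q s * v s ω - p s ω) / rsA α (s+1) ω :=
    Finset.sum_le_sum fun s _ => hterm s
  have hDk := hD k le_rfl
  have h6 : 0 ≤ v k ω / rsA α k ω := div_nonneg (hv k) (rsA_pos hα k).le
  have h7 : ∑ s ∈ Finset.range k, -(α s ω + p s ω) =
      -∑ s ∈ Finset.range k, (α s ω + p s ω) := by rw [Finset.sum_neg_distrib]
  rw [rsY]
  rw [h7] at hsum
  linarith

variable {m0 : MeasurableSpace Ω} (ℱ : Filtration ℕ m0)

lemma rsA_meas (hα : Adapted ℱ α) {n t : ℕ} (hn : n ≤ t + 1) :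
    Measurable[ℱ t] (rsA α n) := by
  apply Finset.measurable_prod
  intro s hs
  have hst : s ≤ t := by simp only [Finset.mem_range] at hs; omega
  exact measurable_const.add ((hα s).mono (ℱ.mono hst) le_rfl)

lemma rsY_meas (hv : Adapted ℱ v) (hα : Adapted ℱ α) (hp : Adapted ℱ p) (t : ℕ) :
    Measurable[ℱ t] (rsY v α p q t) := by
  apply Measurable.add
  · exact (hv t).div (rsA_meas ℱ hα (Nat.le_succ t))
  · apply Finset.measurable_sum
    intro s hs
    have hst : s ≤ t := by simp only [Finset.mem_range] at hs; omega
    have hvs : Measurable[ℱ t] (v s) := (hv s).mono (ℱ.mono hst) le_rfl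
    have hps : Measurable[ℱ t] (p s) := (hp s).mono (ℱ.mono hst) le_rfl
    exact ((measurable_const.mul hvs).sub hps).div (rsA_meas ℱ hα (by omega))

lemma rsD_meas (hα : Adapted ℱ α) (hp : Adapted ℱ p) (t : ℕ) :
    MeasurableSet[ℱ t] (rsD α p M (t+1)) := by
  have heq : rsD α p M (t+1) =
      ⋂ n ∈ Finset.range (t+2), {ω | ∑ s ∈ Finset.range n, (α s ω + p s ω) ≤ M} := by
    ext ω; simp [rsD, Nat.lt_succ_iff]
  rw [heq]
  apply MeasurableSet.biInter (Finset.range (t+2)).countable_toSet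
  intro n hn
  simp only [Finset.coe_range, Set.mem_Iio] at hn
  have : Measurable[ℱ t] (fun ω => ∑ s ∈ Finset.range n, (α s ω + p s ω)) := by
    apply Finset.measurable_sum
    intro s hs
    have hst : s ≤ t := by simp only [Finset.mem_range] at hs; omega
    exact ((hα s).mono (ℱ.mono hst) le_rfl).add
      ((hp s).mono (ℱ.mono hst) le_rfl)
  exact measurableSet_le this measurable_const

lemma rsZ_meas (hv : Adapted ℱ v) (hα : Adapted ℱ α) (hp : Adapted ℱ p) (t : ℕ) :
    Measurable[ℱ t] (rsZ v α p q M t) := by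
  apply Measurable.add
  · exact (hv 0).mono (ℱ.mono (Nat.zero_le t)) le_rfl
  · apply Finset.measurable_sum
    intro s hs
    have hst : s + 1 ≤ t := by simp only [Finset.mem_range] at hs; omega
    have hinc : Measurable[ℱ t] (fun ω' => rsY v α p q (s+1) ω' - rsY v α p q s ω') := by
      have h1 := (rsY_meas ℱ (q := q) hv hα hp (s+1)).mono (ℱ.mono hst) le_rfl
      have h2 := (rsY_meas ℱ (q := q) hv hα hp s).mono (ℱ.mono (by omega : s ≤ t)) le_rfl
      exact h1.sub h2
    exact hinc.indicator (ℱ.mono (show s ≤ t by omega) _ (rsD_meas ℱ (M := M) hα hp s))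

end RSstoch

section RSint
variable {Ω : Type*} {m0 : MeasurableSpace Ω} {μ : Measure Ω} [IsProbabilityMeasure μ]
variable {ℱ : Filtration ℕ m0} {v α p : ℕ → Ω → ℝ} {q : ℕ → ℝ}

lemma rs_abs_div_le {x A : ℝ} (hA : 1 ≤ A) : |x / A| ≤ |x| := by
  rw [abs_div, abs_of_pos (by linarith : (0:ℝ) < A)]
  exact div_le_self (abs_nonneg x) hA

lemma rs_p_le_M {M : ℝ} {ω : Ω} (hα : ∀ s, 0 ≤ α s ω) (hp : ∀ s, 0 ≤ p s ω)
    {s : ℕ} (hω : ω ∈ rsD α p M (s+1)) : p s ω ≤ M := by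
  have h2 : α s ω + p s ω ≤ ∑ u ∈ Finset.range (s+1), (α u ω + p u ω) :=
    Finset.single_le_sum (f := fun u => α u ω + p u ω)
      (fun u _ => add_nonneg (hα u) (hp u)) (Finset.self_mem_range_succ s)
  have h3 := hω (s+1) le_rfl
  linarith [hα s]

lemma rsInc_bound {M : ℝ} (hM : 0 ≤ M) (hq : ∀ s, 0 ≤ q s) {ω : Ω}
    (hg : ∀ s, 0 ≤ v s ω ∧ 0 ≤ α s ω ∧ 0 ≤ p s ω) (s : ℕ) :
    ‖(rsD α p M (s+1)).indicator
        (fun ω' => rsY v α p q (s+1) ω' - rsY v α p q s ω') ω‖ ≤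
      ‖v (s+1) ω‖ + ‖v s ω‖ + q s * ‖v s ω‖ + M := by
  have hα : ∀ u, 0 ≤ α u ω := fun u => (hg u).2.1
  have hp' : ∀ u, 0 ≤ p u ω := fun u => (hg u).2.2
  have hnn : (0:ℝ) ≤ ‖v (s+1) ω‖ + ‖v s ω‖ + q s * ‖v s ω‖ + M := by
    have := norm_nonneg (v (s+1) ω); have := norm_nonneg (v s ω)
    have := mul_nonneg (hq s) (norm_nonneg (v s ω)); linarith
  by_cases hω : ω ∈ rsD α p M (s+1)
  · rw [Set.indicator_of_mem hω]
    simp only [Real.norm_eq_abs] at *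
    rw [rsY_succ_sub]
    have e1 : |v (s+1) ω / rsA α (s+2-1) ω| ≤ |v (s+1) ω| := rs_abs_div_le (rsA_one_le hα _)
    have e2 : |v s ω / rsA α s ω| ≤ |v s ω| := rs_abs_div_le (rsA_one_le hα s)
    have e3 : |(q s * v s ω - p s ω) / rsA α (s+1) ω| ≤ q s * |v s ω| + M := by
      refine (rs_abs_div_le (rsA_one_le hα (s+1))).trans ?_
      have h5 : |q s * v s ω - p s ω| ≤ |q s * v s ω| + |p s ω| := abs_sub _ _
      rw [abs_mul, abs_of_nonneg (hq s), abs_of_nonneg (hp' s)] at h5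
      linarith [rs_p_le_M hα hp' hω]
    calc |v (s+1) ω / rsA α (s+1) ω - v s ω / rsA α s ω
            + (q s * v s ω - p s ω) / rsA α (s+1) ω|
        ≤ |v (s+1) ω / rsA α (s+1) ω - v s ω / rsA α s ω|
            + |(q s * v s ω - p s ω) / rsA α (s+1) ω| := abs_add_le _ _
      _ ≤ |v (s+1) ω / rsA α (s+1) ω| + |v s ω / rsA α s ω|
            + |(q s * v s ω - p s ω) / rsA α (s+1) ω| := by linarith [abs_sub (v (s+1) ω / rsA α (s+1) ω) (v s ω / rsA α s ω)]
      _ ≤ |v (s+1) ω| + |v s ω| + (q s * |v s ω| + M) := by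
            have e1' : |v (s+1) ω / rsA α (s+1) ω| ≤ |v (s+1) ω| :=
              rs_abs_div_le (rsA_one_le hα (s+1))
            linarith
      _ = |v (s+1) ω| + |v s ω| + q s * |v s ω| + M := by ring
  · rw [Set.indicator_of_notMem hω]
    simpa using hnn

lemma rsInc_int (hv_adp : Adapted ℱ v) (hα_adp : Adapted ℱ α) (hp_adp : Adapted ℱ p)
    (hv_int : ∀ t, Integrable (v t) μ) (hq : ∀ s, 0 ≤ q s)
    (hgood : ∀ᵐ ω ∂μ, ∀ s, 0 ≤ v s ω ∧ 0 ≤ α s ω ∧ 0 ≤ p s ω) {M : ℝ} (hM : 0 ≤ M) (s : ℕ) :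
    Integrable ((rsD α p M (s+1)).indicator
      (fun ω' => rsY v α p q (s+1) ω' - rsY v α p q s ω')) μ := by
  apply Integrable.mono'
    (g := fun ω => ‖v (s+1) ω‖ + ‖v s ω‖ + q s * ‖v s ω‖ + M)
  · exact (((hv_int (s+1)).norm.add (hv_int s).norm).add
      ((hv_int s).norm.const_mul (q s))).add (integrable_const _)
  · have hsub : Measurable[ℱ (s+1)] (fun ω' => rsY v α p q (s+1) ω' - rsY v α p q s ω') :=
      (rsY_meas ℱ hv_adp hα_adp hp_adp (s+1)).sub
        ((rsY_meas ℱ hv_adp hα_adp hp_adp s).mono (ℱ.mono (Nat.le_succ s)) le_rfl)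
    have hm : Measurable ((rsD α p M (s+1)).indicator
        (fun ω' => rsY v α p q (s+1) ω' - rsY v α p q s ω')) :=
      ((hsub.mono (ℱ.le (s+1)) le_rfl)).indicator
        (ℱ.le s _ (rsD_meas ℱ (M := M) hα_adp hp_adp s))
    exact hm.aestronglyMeasurable
  · filter_upwards [hgood] with ω hg
    exact rsInc_bound hM hq hg s

lemma rsZ_int (hv_adp : Adapted ℱ v) (hα_adp : Adapted ℱ α) (hp_adp : Adapted ℱ p)
    (hv_int : ∀ t, Integrable (v t) μ) (hq : ∀ s, 0 ≤ q s)
    (hgood : ∀ᵐ ω ∂μ, ∀ s, 0 ≤ v s ω ∧ 0 ≤ α s ω ∧ 0 ≤ p s ω) {M : ℝ} (hM : 0 ≤ M) (t : ℕ) :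
    Integrable (rsZ v α p q M t) μ := by
  have : Integrable (fun ω => v 0 ω + ∑ s ∈ Finset.range t,
      (rsD α p M (s+1)).indicator
        (fun ω' => rsY v α p q (s+1) ω' - rsY v α p q s ω') ω) μ :=
    (hv_int 0).add (integrable_finset_sum _ fun s _ =>
      rsInc_int hv_adp hα_adp hp_adp hv_int hq hgood hM s)
  exact this

end RSint

section RSsuper
variable {Ω : Type*} {m0 : MeasurableSpace Ω} {μ : Measure Ω} [IsProbabilityMeasure μ]
variable {ℱ : Filtration ℕ m0} {v α p : ℕ → Ω → ℝ} {q : ℕ → ℝ}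

lemma rsZ_super (hv_adp : Adapted ℱ v) (hα_adp : Adapted ℱ α) (hp_adp : Adapted ℱ p)
    (hv_int : ∀ t, Integrable (v t) μ) (hq : ∀ s, 0 ≤ q s)
    (hgood : ∀ᵐ ω ∂μ, ∀ s, 0 ≤ v s ω ∧ 0 ≤ α s ω ∧ 0 ≤ p s ω)
    (hrec : ∀ t, μ[v (t + 1)|ℱ t] ≤ᵐ[μ] fun ω => (1 + α t ω - q t) * v t ω + p t ω)
    {M : ℝ} (hM : 0 ≤ M) :
    Supermartingale (rsZ v α p q M) ℱ μ := by
  have hint : ∀ t, Integrable (rsZ v α p q M t) μ :=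
    fun t => rsZ_int hv_adp hα_adp hp_adp hv_int hq hgood hM t
  refine supermartingale_nat (fun t => ((rsZ_meas ℱ hv_adp hα_adp hp_adp t)).stronglyMeasurable)
    hint (fun t => ?_)
  -- notation
  set D := rsD α p M (t+1) with hD
  have hDmeas : MeasurableSet[ℱ t] D := rsD_meas ℱ (M := M) hα_adp hp_adp t
  set g : Ω → ℝ := D.indicator (fun ω => (rsA α (t+1) ω)⁻¹) with hgdef
  set r : Ω → ℝ := D.indicator
    (fun ω => (q t * v t ω - p t ω) / rsA α (t+1) ω - v t ω / rsA α t ω) with hrdef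
  have hg_meas : Measurable[ℱ t] g :=
    ((rsA_meas ℱ hα_adp (le_refl (t+1))).inv).indicator hDmeas
  have hr_meas : Measurable[ℱ t] r := by
    apply Measurable.indicator _ hDmeas
    exact (((measurable_const.mul (hv_adp t)).sub (hp_adp t)).div
        (rsA_meas ℱ hα_adp (le_refl (t+1)))).sub
      ((hv_adp t).div (rsA_meas ℱ hα_adp (Nat.le_succ t)))
  have hfun : rsZ v α p q M (t+1) = (rsZ v α p q M t + r) + g * v (t+1) := by
    funext ω
    by_cases hω : ω ∈ D
    · simp only [Pi.add_apply, Pi.mul_apply, hgdef, hrdef,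
        Set.indicator_of_mem hω, Set.indicator_of_mem (show ω ∈ rsD α p M (t+1) from hω),
        rsZ_succ, rsY_succ_sub]
      simp only [div_eq_mul_inv]; ring
    · simp only [Pi.add_apply, Pi.mul_apply, hgdef, hrdef,
        Set.indicator_of_notMem hω, Set.indicator_of_notMem (show ω ∉ rsD α p M (t+1) from hω),
        rsZ_succ, add_zero, zero_mul]
  have hgood' : ∀ᵐ ω ∂μ, ∀ s, 0 ≤ α s ω ∧ 0 ≤ p s ω := by
    filter_upwards [hgood] with ω h s; exact ⟨(h s).2.1, (h s).2.2⟩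
  -- integrability
  have hr_int : Integrable r μ := by
    apply Integrable.mono' (g := fun ω => q t * ‖v t ω‖ + M + ‖v t ω‖)
    · exact (((hv_int t).norm.const_mul (q t)).add (integrable_const _)).add (hv_int t).norm
    · exact ((hr_meas.mono (ℱ.le t) le_rfl)).aestronglyMeasurable
    · filter_upwards [hgood] with ω hg
      have hα : ∀ u, 0 ≤ α u ω := fun u => (hg u).2.1
      have hp' : ∀ u, 0 ≤ p u ω := fun u => (hg u).2.2
      have hnn : (0:ℝ) ≤ q t * ‖v t ω‖ + M + ‖v t ω‖ := by
        have := mul_nonneg (hq t) (norm_nonneg (v t ω)); have := norm_nonneg (v t ω); linarith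
      by_cases hω : ω ∈ D
      · rw [hrdef, Set.indicator_of_mem hω]
        simp only [Real.norm_eq_abs] at *
        have e3 : |(q t * v t ω - p t ω) / rsA α (t+1) ω| ≤ q t * |v t ω| + M := by
          refine (rs_abs_div_le (rsA_one_le hα (t+1))).trans ?_
          have h5 : |q t * v t ω - p t ω| ≤ |q t * v t ω| + |p t ω| := abs_sub _ _
          rw [abs_mul, abs_of_nonneg (hq t), abs_of_nonneg (hp' t)] at h5
          linarith [rs_p_le_M hα hp' hω]
        have e2 : |v t ω / rsA α t ω| ≤ |v t ω| := rs_abs_div_le (rsA_one_le hα t)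
        calc |(q t * v t ω - p t ω) / rsA α (t+1) ω - v t ω / rsA α t ω|
            ≤ |(q t * v t ω - p t ω) / rsA α (t+1) ω| + |v t ω / rsA α t ω| := abs_sub _ _
          _ ≤ q t * |v t ω| + M + |v t ω| := by linarith
      · rw [hrdef, Set.indicator_of_notMem hω]
        simpa using hnn
  have hgv_int : Integrable (g * v (t+1)) μ := by
    apply Integrable.mono' (g := fun ω => ‖v (t+1) ω‖)
    · exact (hv_int (t+1)).norm
    · exact ((hg_meas.mono (ℱ.le t) le_rfl).mul
        ((hv_adp (t+1)).mono (ℱ.le (t+1)) le_rfl)).aestronglyMeasurable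
    · filter_upwards [hgood] with ω hg'
      have hα : ∀ u, 0 ≤ α u ω := fun u => (hg' u).2.1
      have hg01 : 0 ≤ g ω ∧ g ω ≤ 1 := by
        rw [hgdef]
        by_cases hω : ω ∈ D
        · rw [Set.indicator_of_mem hω]
          constructor
          · exact inv_nonneg.2 (rsA_pos hα (t+1)).le
          · exact inv_le_one_of_one_le₀ (rsA_one_le hα (t+1))
        · rw [Set.indicator_of_notMem hω]; exact ⟨le_rfl, zero_le_one⟩
      have : ‖(g * v (t+1)) ω‖ = |g ω| * |v (t+1) ω| := by
        simp [Real.norm_eq_abs, abs_mul]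
      rw [this, Real.norm_eq_abs]
      calc |g ω| * |v (t+1) ω| ≤ 1 * |v (t+1) ω| := by
            apply mul_le_mul_of_nonneg_right _ (abs_nonneg _)
            rw [abs_of_nonneg hg01.1]; exact hg01.2
        _ = |v (t+1) ω| := one_mul _
  have hZr_int : Integrable (rsZ v α p q M t + r) μ := (hint t).add hr_int
  have hZr_sm : StronglyMeasurable[ℱ t] (rsZ v α p q M t + r) :=
    ((rsZ_meas ℱ hv_adp hα_adp hp_adp t).add hr_meas).stronglyMeasurable
  have hcexp1 : μ[rsZ v α p q M (t+1)|ℱ t] = μ[(rsZ v α p q M t + r) + g * v (t+1)|ℱ t] := by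
    rw [hfun]
  have hcexp2 := condExp_add (μ := μ) (m := ℱ t) hZr_int hgv_int
  have hcexp3 : μ[rsZ v α p q M t + r|ℱ t] = rsZ v α p q M t + r :=
    condExp_of_stronglyMeasurable (ℱ.le t) hZr_sm hZr_int
  have hcexp4 : μ[g * v (t+1)|ℱ t] =ᵐ[μ] g * μ[v (t+1)|ℱ t] :=
    condExp_mul_of_stronglyMeasurable_left (hg_meas.stronglyMeasurable) hgv_int (hv_int (t+1))
  rw [hcexp1]
  filter_upwards [hcexp2, hcexp4, hrec t, hgood] with ω e2 e4 hrecω hgω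
  rw [e2, Pi.add_apply, hcexp3, Pi.add_apply, e4, Pi.mul_apply]
  have hα : ∀ u, 0 ≤ α u ω := fun u => (hgω u).2.1
  by_cases hω : ω ∈ D
  · have hge : g ω = (rsA α (t+1) ω)⁻¹ := by rw [hgdef, Set.indicator_of_mem hω]
    have hre : r ω = (q t * v t ω - p t ω) / rsA α (t+1) ω - v t ω / rsA α t ω := by
      rw [hrdef, Set.indicator_of_mem hω]
    have hApos := rsA_pos hα t
    have h1α : (0:ℝ) < 1 + α t ω := by linarith [hα t]
    have hsucc : rsA α (t+1) ω = rsA α t ω * (1 + α t ω) := by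
      rw [rsA_eq, rsA_eq, Finset.prod_range_succ]
    have hmul : g ω * (μ[v (t+1)|ℱ t]) ω ≤ g ω * ((1 + α t ω - q t) * v t ω + p t ω) := by
      apply mul_le_mul_of_nonneg_left hrecω
      rw [hge]; exact inv_nonneg.2 (rsA_pos hα (t+1)).le
    have hkey : (rsA α (t+1) ω)⁻¹ * ((1 + α t ω - q t) * v t ω + p t ω) +
        ((q t * v t ω - p t ω) / rsA α (t+1) ω - v t ω / rsA α t ω) = 0 := by
      rw [hsucc]
      field_simp
      ring
    rw [hge] at hmul
    rw [hre, hge]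
    linarith
  · have hge : g ω = 0 := by rw [hgdef, Set.indicator_of_notMem hω]
    have hre : r ω = 0 := by rw [hrdef, Set.indicator_of_notMem hω]
    rw [hge, hre]
    simp

end RSsuper

section RSconv
variable {Ω : Type*} {m0 : MeasurableSpace Ω} {μ : Measure Ω} [IsProbabilityMeasure μ]
variable {ℱ : Filtration ℕ m0} {v α p : ℕ → Ω → ℝ} {q : ℕ → ℝ}

lemma rsZ_conv (hv_adp : Adapted ℱ v) (hα_adp : Adapted ℱ α) (hp_adp : Adapted ℱ p)
    (hv_int : ∀ t, Integrable (v t) μ) (hq : ∀ s, 0 ≤ q s)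
    (hgood : ∀ᵐ ω ∂μ, ∀ s, 0 ≤ v s ω ∧ 0 ≤ α s ω ∧ 0 ≤ p s ω)
    (hrec : ∀ t, μ[v (t + 1)|ℱ t] ≤ᵐ[μ] fun ω => (1 + α t ω - q t) * v t ω + p t ω)
    (M : ℕ) :
    ∀ᵐ ω ∂μ, ∃ c, Tendsto (fun t => rsZ v α p q (M:ℝ) t ω) atTop (𝓝 c) := by
  have hM : (0:ℝ) ≤ (M:ℝ) := Nat.cast_nonneg M
  have hsuper := rsZ_super hv_adp hα_adp hp_adp hv_int hq hgood hrec hM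
  have hint := fun t => rsZ_int (μ := μ) hv_adp hα_adp hp_adp hv_int hq hgood hM t
  have hlow : ∀ t, ∀ᵐ ω ∂μ, -(M:ℝ) ≤ rsZ v α p q (M:ℝ) t ω := by
    intro t
    filter_upwards [hgood] with ω hg
    obtain ⟨k, _, hZ, hD, _⟩ := rsZ_rep (v := v) (q := q) hM t ω
    rw [hZ]
    exact rsY_lower (fun s => (hg s).1) (fun s => (hg s).2.1) (fun s => (hg s).2.2) hq hD
  set R : NNReal := Real.toNNReal ((∫ ω, v 0 ω ∂μ) + 2*(M:ℝ)) with hR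
  have hbdd : ∀ t, eLpNorm (rsZ v α p q (M:ℝ) t) 1 μ ≤ (R : ENNReal) := by
    intro t
    rw [eLpNorm_one_eq_lintegral_enorm, ← ofReal_integral_norm_eq_lintegral_enorm (hint t)]
    have h1 : ∫ ω, ‖rsZ v α p q (M:ℝ) t ω‖ ∂μ ≤
        ∫ ω, (rsZ v α p q (M:ℝ) t ω + 2*(M:ℝ)) ∂μ := by
      apply integral_mono_ae (hint t).norm ((hint t).add (integrable_const _))
      filter_upwards [hlow t] with ω hω
      have hgoal : |rsZ v α p q (M:ℝ) t ω| ≤ rsZ v α p q (M:ℝ) t ω + 2*(M:ℝ) := by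
        rcases abs_cases (rsZ v α p q (M:ℝ) t ω) with ⟨h, _⟩ | ⟨h, _⟩ <;> linarith
      simpa [Real.norm_eq_abs] using hgoal
    have h2 : ∫ ω, (rsZ v α p q (M:ℝ) t ω + 2*(M:ℝ)) ∂μ =
        (∫ ω, rsZ v α p q (M:ℝ) t ω ∂μ) + 2*(M:ℝ) := by
      rw [integral_add (hint t) (integrable_const _), integral_const]
      simp [measure_univ]
    have h3 : ∫ ω, rsZ v α p q (M:ℝ) t ω ∂μ ≤ ∫ ω, rsZ v α p q (M:ℝ) 0 ω ∂μ := by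
      have h4 := hsuper.2.1 0 t (Nat.zero_le t)
      have h5 := integral_mono_ae integrable_condExp (hint 0) h4
      rwa [integral_condExp (ℱ.le 0)] at h5
    have h6 : ∫ ω, rsZ v α p q (M:ℝ) 0 ω ∂μ = ∫ ω, v 0 ω ∂μ := by
      apply integral_congr_ae
      filter_upwards with ω
      exact rsZ_zero ω
    rw [h6] at h3
    have : eLpNorm (rsZ v α p q (M:ℝ) t) 1 μ ≤ eLpNorm (rsZ v α p q (M:ℝ) t) 1 μ := le_rfl
    calc ENNReal.ofReal (∫ ω, ‖rsZ v α p q (M:ℝ) t ω‖ ∂μ)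
        ≤ ENNReal.ofReal ((∫ ω, v 0 ω ∂μ) + 2*(M:ℝ)) := by
          apply ENNReal.ofReal_le_ofReal; linarith
      _ = (R : ENNReal) := by rw [hR, ENNReal.ofReal]
  have hsub := hsuper.neg
  have hconv := hsub.exists_ae_tendsto_of_bdd (R := R) (fun n => by
    rw [show (-rsZ v α p q (M:ℝ)) n = -(rsZ v α p q (M:ℝ) n) from rfl, eLpNorm_neg]
    exact hbdd n)
  filter_upwards [hconv] with ω hc
  obtain ⟨c, hc⟩ := hc
  refine ⟨-c, ?_⟩
  have := hc.neg
  simpa using this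

end RSconv


/-- Robbins–Siegmund type lemma (Lemma 1 of the paper): for nonnegative adapted
random sequences `v, α, p` and a deterministic nonnegative sequence `q` with
`∑ α < ∞` a.s., `∑ p < ∞` a.s., `∑ q = ∞`, and
`E[v_{t+1} | F_t] ≤ (1 + α_t − q_t) v_t + p_t` a.s. for all `t`,
we have `∑ q_t v_t < ∞` and `v_t → 0` a.s. -/
theorem stmt0
    {Ω : Type*} {m0 : MeasurableSpace Ω} {μ : Measure Ω} [IsProbabilityMeasure μ]
    (ℱ : Filtration ℕ m0)
    (v α p : ℕ → Ω → ℝ) (q : ℕ → ℝ)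
    (hv_adp : Adapted ℱ v) (hα_adp : Adapted ℱ α) (hp_adp : Adapted ℱ p)
    (hv_int : ∀ t, Integrable (v t) μ)
    (hv_nn : ∀ t, 0 ≤ᵐ[μ] v t) (hα_nn : ∀ t, 0 ≤ᵐ[μ] α t) (hp_nn : ∀ t, 0 ≤ᵐ[μ] p t)
    (hq_nn : ∀ t, 0 ≤ q t)
    (hα_sum : ∀ᵐ ω ∂μ, Summable fun t => α t ω)
    (hp_sum : ∀ᵐ ω ∂μ, Summable fun t => p t ω)
    (hq_div : Tendsto (fun T => ∑ t ∈ Finset.range T, q t) atTop atTop)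
    (hrec : ∀ t, μ[v (t + 1)|ℱ t] ≤ᵐ[μ] fun ω => (1 + α t ω - q t) * v t ω + p t ω) :
    ∀ᵐ ω ∂μ, (Summable fun t => q t * v t ω) ∧ Tendsto (fun t => v t ω) atTop (𝓝 0) := by
  have hgood : ∀ᵐ ω ∂μ, ∀ s, 0 ≤ v s ω ∧ 0 ≤ α s ω ∧ 0 ≤ p s ω := by
    rw [ae_all_iff]
    intro s
    filter_upwards [hv_nn s, hα_nn s, hp_nn s] with ω h1 h2 h3
    exact ⟨h1, h2, h3⟩
  have hall : ∀ᵐ ω ∂μ, ∀ M : ℕ, ∃ c,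
      Tendsto (fun t => rsZ v α p q (M:ℝ) t ω) atTop (𝓝 c) :=
    ae_all_iff.2 (fun M => rsZ_conv hv_adp hα_adp hp_adp hv_int hq_nn hgood hrec M)
  filter_upwards [hall, hα_sum, hp_sum, hgood] with ω hZc hαω hpω hg
  set M : ℕ := ⌈∑' s, (α s ω + p s ω)⌉₊ with hMdef
  have hsum_ap : Summable (fun s => α s ω + p s ω) := hαω.add hpω
  have hmem : ∀ t, ω ∈ rsD α p (M:ℝ) t := by
    intro t n hn
    calc ∑ s ∈ Finset.range n, (α s ω + p s ω)
        ≤ ∑' s, (α s ω + p s ω) :=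
          Summable.sum_le_tsum _ (fun i _ => add_nonneg (hg i).2.1 (hg i).2.2) hsum_ap
      _ ≤ (M:ℝ) := Nat.le_ceil _
  obtain ⟨c, hc⟩ := hZc M
  have hY : Tendsto (fun t => rsY v α p q t ω) atTop (𝓝 c) :=
    hc.congr (fun t => rsZ_eq_rsY hmem t)
  exact rs_real (fun t => v t ω) (fun t => α t ω) (fun t => p t ω) q
    (fun t => (hg t).1) (fun t => (hg t).2.1) (fun t => (hg t).2.2) hq_nn hαω hpω hq_div c
    (by simpa [rsY, rsA] using hY)
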